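/- Let K be a field of characteristic zero and let (A, m_k, Q) be an n-cyclic A∞-algebra over K of finite type, i.e. m_k = 0 for all k > N. Then the Kuranishi map κ : A^1 → A^2, κ(x) = Σ_{k=0}^{N} m_k(x, …, x), satisfies Q(κ(x), κ(x)) = Q(m_0(1), m_0(1)) for every x ∈ A^1; in particular the quantity Q(κ(x), κ(x)) is independent of x. -/

import Mathlib

/-- A (curved) A∞-algebra structure on a ℤ-graded `K`-vector space `V`:
graded pieces `grading p` (with `V` their direct sum), multilinear operations
`m k` of degree `2 - k` satisfying the A∞-relations (with Koszul signs) on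
homogeneous elements `x j ∈ grading (d j)`.  The inner sum over `i` encodes the
insertion of `m (k+1-k1) (x_i, …, x_{i+k2-1})` at (0-indexed) position `i`
among the `k1` arguments of `m k1`. -/
structure AInftyAlgebra (K V : Type) [Field K] [AddCommGroup V] [Module K V] where
  grading : ℤ → Submodule K V
  decomposition : DirectSum.Decomposition grading
  m : (k : ℕ) → MultilinearMap K (fun _ : Fin k => V) V
  m_degree : ∀ (k : ℕ) (d : ℕ → ℤ) (x : ℕ → V),
    (∀ j, x j ∈ grading (d j)) →
    m k (fun j : Fin k => x j) ∈ grading (2 - (k : ℤ) + ∑ j ∈ Finset.range k, d j)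
  ainfty_rel : ∀ (k : ℕ) (d : ℕ → ℤ) (x : ℕ → V),
    (∀ j, x j ∈ grading (d j)) →
    ∑ k1 ∈ Finset.range (k + 2), ∑ i ∈ Finset.range k1,
      ((-1 : K) ^ ((∑ j ∈ Finset.range i, d j) + (i : ℤ))) •
        m k1 (fun j : Fin k1 =>
          if (j : ℕ) < i then x j
          else if (j : ℕ) = i then
            m (k + 1 - k1) (fun l : Fin (k + 1 - k1) => x (i + (l : ℕ)))
          else x ((j : ℕ) + (k + 1 - k1) - 1)) = 0

/-- An `n`-cyclic A∞-algebra: a finite-dimensional A∞-algebra together with a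
bilinear pairing `Q` concentrated in total degree `n`, graded-antisymmetric and
cyclically invariant with respect to the operations `m k` (on homogeneous
elements `x 0, …, x k` of degrees `d 0, …, d k`). -/
structure CyclicAInftyAlgebra (K V : Type) [Field K] [AddCommGroup V] [Module K V]
    (n : ℤ) extends AInftyAlgebra K V where
  finiteDimensional : FiniteDimensional K V
  Q : V →ₗ[K] V →ₗ[K] K
  Q_graded : ∀ (p q : ℤ), p + q ≠ n → ∀ x ∈ grading p, ∀ y ∈ grading q, Q x y = 0
  Q_antisymm : ∀ (p q : ℤ) (x y : V), x ∈ grading p → y ∈ grading q →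
    Q x y = ((-1 : K) ^ ((p + 1) * (q + 1) + 1)) * Q y x
  Q_cyclic : ∀ (k : ℕ) (d : ℕ → ℤ) (x : ℕ → V), (∀ j, x j ∈ grading (d j)) →
    Q (m k (fun j : Fin k => x ((j : ℕ) + 1))) (x 0) =
      ((-1 : K) ^ ((d 0 + 1) * ((∑ j ∈ Finset.range k, d (j + 1)) + (k : ℤ)))) *
        Q (m k (fun j : Fin k => x (j : ℕ))) (x k)

/-- The Kuranishi map of an A∞-algebra of finite type (`m k = 0` for `k > N`):
`κ(x) = ∑_{k=0}^{N} m_k(x, …, x)`. -/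
def kuranishi {K V : Type} [Field K] [AddCommGroup V] [Module K V]
    (A : AInftyAlgebra K V) (N : ℕ) (x : V) : V :=
  ∑ k ∈ Finset.range (N + 1), A.m k (fun _ => x)


section AuxProof

variable {K V : Type} [Field K] [AddCommGroup V] [Module K V] {n : ℤ}

lemma aux_hdeg (A : AInftyAlgebra K V) {x : V} (hx : x ∈ A.grading 1) (k : ℕ) :
    A.m k (fun _ => x) ∈ A.grading 2 := by
  have h := A.m_degree k (fun _ => 1) (fun _ => x) (fun _ => hx)
  simpa using h

lemma aux_sym (A : CyclicAInftyAlgebra K V n) {y z : V}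
    (hy : y ∈ A.grading 2) (hz : z ∈ A.grading 2) : A.Q y z = A.Q z y := by
  have h := A.Q_antisymm 2 2 y z hy hz
  rw [show ((2:ℤ)+1)*((2:ℤ)+1)+1 = 10 by norm_num,
    show ((-1:K)^(10:ℤ)) = 1 from Even.neg_one_zpow ⟨5, by norm_num⟩, one_mul] at h
  exact h

lemma aux_rot (A : CyclicAInftyAlgebra K V n) {x : V} (hx : x ∈ A.grading 1)
    {w : V} (hw : w ∈ A.grading 2) :
    ∀ (t k1 i : ℕ), i < k1 → k1 - i ≤ t →
    A.Q (A.m k1 (fun j : Fin k1 => if (j : ℕ) = i then w else x)) x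
      = A.Q (A.m k1 (fun _ : Fin k1 => x)) w := by
  intro t
  induction t with
  | zero => intro k1 i hi h; omega
  | succ t ih =>
    intro k1 i hi hle
    have hcyc := A.Q_cyclic k1 (fun s => if s = i + 1 then (2:ℤ) else 1)
      (fun s => if s = i + 1 then w else x)
      (fun j => by split <;> assumption)
    have e1 : (fun j : Fin k1 => if ((j:ℕ) + 1) = i + 1 then w else x)
        = (fun j : Fin k1 => if (j:ℕ) = i then w else x) := by
      funext j; simp
    rw [e1, if_neg (show ¬ (0:ℕ) = i + 1 by omega),
      if_neg (show ¬ (0:ℕ) = i + 1 by omega)] at hcyc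
    rw [show ((-1:K)^((((1:ℤ))+1) * ((∑ j ∈ Finset.range k1,
        (if j + 1 = i + 1 then (2:ℤ) else 1)) + (k1:ℤ)))) = 1 from
      Even.neg_one_zpow ⟨(∑ j ∈ Finset.range k1,
        (if j + 1 = i + 1 then (2:ℤ) else 1)) + (k1:ℤ), by ring⟩, one_mul] at hcyc
    by_cases hk : i + 1 = k1
    · rw [hcyc]
      have e2 : (fun j : Fin k1 => if (j:ℕ) = i + 1 then w else x)
          = (fun _ : Fin k1 => x) := by
        funext j
        have hj := j.isLt
        exact if_neg (by omega)
      rw [e2, if_pos hk.symm]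
    · rw [hcyc, if_neg (by omega : ¬ k1 = i + 1)]
      exact ih k1 (i + 1) (by omega) (by omega)

lemma aux_T [CharZero K] (A : CyclicAInftyAlgebra K V n) {x : V} (hx : x ∈ A.grading 1)
    (s : ℕ) (hs : 1 ≤ s) :
    ∑ a ∈ Finset.range (s + 1),
      A.Q (A.m a (fun _ => x)) (A.m (s - a) (fun _ => x)) = 0 := by
  set c : ℕ → ℕ → K := fun a b => A.Q (A.m a (fun _ => x)) (A.m b (fun _ => x)) with hc
  have csym : ∀ a b, c a b = c b a := fun a b =>
    aux_sym A (aux_hdeg _ hx a) (aux_hdeg _ hx b)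
  -- the A∞-relation with all inputs x
  have hrel := A.ainfty_rel (s - 1) (fun _ => 1) (fun _ => x) (fun _ => hx)
  rw [show s - 1 + 2 = s + 1 by omega, show s - 1 + 1 = s by omega] at hrel
  have hsgn : ∀ i : ℕ, ((-1:K)^((i:ℤ)+(i:ℤ))) = 1 := fun i => Even.neg_one_zpow ⟨i, rfl⟩
  simp only [Finset.sum_const, Finset.card_range, nsmul_eq_mul, mul_one, hsgn, one_smul] at hrel
  have hfun : ∀ (k1 i : ℕ),
      (fun j : Fin k1 => if (j:ℕ) < i then x else if (j:ℕ) = i then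
        A.m (s - k1) (fun _ => x) else x)
      = (fun j : Fin k1 => if (j:ℕ) = i then A.m (s - k1) (fun _ => x) else x) := by
    intro k1 i; funext j
    rcases lt_trichotomy (j:ℕ) i with h|h|h
    · rw [if_pos h, if_neg (by omega)]
    · rw [if_neg (by omega), if_pos h]
    · rw [if_neg (by omega), if_neg (by omega)]
  simp only [hfun] at hrel
  have h2 := congrArg (A.Q.flip x) hrel
  simp only [map_sum, map_zero, LinearMap.flip_apply] at h2
  have h3 : ∀ k1 ∈ Finset.range (s + 1),
      (∑ i ∈ Finset.range k1,
        A.Q (A.m k1 (fun j : Fin k1 =>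
          if (j:ℕ) = i then A.m (s - k1) (fun _ => x) else x)) x)
      = k1 • c k1 (s - k1) := by
    intro k1 _
    rw [Finset.sum_congr rfl (fun i hi =>
      aux_rot A hx (aux_hdeg _ hx (s - k1)) k1 k1 i (Finset.mem_range.1 hi)
        (Nat.sub_le _ _))]
    rw [Finset.sum_const, Finset.card_range]
  rw [Finset.sum_congr rfl h3] at h2
  -- h2 : ∑ k1, k1 • c k1 (s - k1) = 0
  have hS2 : ∑ k1 ∈ Finset.range (s + 1), (s - k1) • c k1 (s - k1) = 0 := by
    have hr := Finset.sum_range_reflect (fun k1 => k1 • c (s - k1) k1) (s + 1)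
    have e : ∀ j ∈ Finset.range (s + 1),
        (s + 1 - 1 - j) • c (s - (s + 1 - 1 - j)) (s + 1 - 1 - j)
        = (s - j) • c j (s - j) := by
      intro j hj
      have hj' := Finset.mem_range.1 hj
      rw [show s + 1 - 1 - j = s - j by omega, show s - (s - j) = j by omega]
    calc ∑ k1 ∈ Finset.range (s + 1), (s - k1) • c k1 (s - k1)
        = ∑ j ∈ Finset.range (s + 1),
            (s + 1 - 1 - j) • c (s - (s + 1 - 1 - j)) (s + 1 - 1 - j) :=
          (Finset.sum_congr rfl e).symm
      _ = ∑ k1 ∈ Finset.range (s + 1), k1 • c (s - k1) k1 := hr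
      _ = ∑ k1 ∈ Finset.range (s + 1), k1 • c k1 (s - k1) :=
          Finset.sum_congr rfl (fun k1 _ => by rw [csym])
      _ = 0 := h2
  have hfin : s • (∑ k1 ∈ Finset.range (s + 1), c k1 (s - k1)) = 0 := by
    rw [Finset.smul_sum,
      Finset.sum_congr rfl (fun k1 hk1 => by
        have := Finset.mem_range.1 hk1
        rw [← add_nsmul]
        congr 1
        omega :
        ∀ k1 ∈ Finset.range (s + 1), s • c k1 (s - k1)
          = k1 • c k1 (s - k1) + (s - k1) • c k1 (s - k1)),
      Finset.sum_add_distrib, h2, hS2, add_zero]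
  rw [nsmul_eq_mul] at hfin
  exact (mul_eq_zero.1 hfin).resolve_left (Nat.cast_ne_zero.2 (by omega))

end AuxProof

/-- For an `n`-cyclic A∞-algebra of finite type over a field of characteristic
zero, the Kuranishi map `κ(x) = Σ_{k=0}^N m_k(x,…,x)` satisfies
`Q(κ(x), κ(x)) = Q(m_0(1), m_0(1))` for every `x` of degree 1; in particular
`Q(κ(x),κ(x))` is independent of `x`. -/
theorem Q_kuranishi_kuranishi_const {K V : Type} [Field K] [CharZero K]
    [AddCommGroup V] [Module K V] (n : ℤ) (A : CyclicAInftyAlgebra K V n)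
    (N : ℕ) (hN : ∀ k, N < k → A.m k = 0)
    (x : V) (hx : x ∈ A.grading 1) :
    A.Q (kuranishi A.toAInftyAlgebra N x) (kuranishi A.toAInftyAlgebra N x) =
      A.Q (A.m 0 ![]) (A.m 0 ![]) := by
  classical
  set c : ℕ → ℕ → K := fun a b => A.Q (A.m a (fun _ => x)) (A.m b (fun _ => x)) with hc
  have hc0 : ∀ a b : ℕ, N < a ∨ N < b → c a b = 0 := by
    intro a b hab
    rcases hab with h | h
    · simp [hc, hN a h]
    · simp [hc, hN b h]
  have step1 : A.Q (kuranishi A.toAInftyAlgebra N x) (kuranishi A.toAInftyAlgebra N x)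
      = ∑ a ∈ Finset.range (N + 1), ∑ b ∈ Finset.range (N + 1), c a b := by
    simp only [kuranishi, map_sum, LinearMap.sum_apply, Finset.sum_apply, hc]
    rw [Finset.sum_comm]
  have step2 : (∑ a ∈ Finset.range (N + 1), ∑ b ∈ Finset.range (N + 1), c a b)
      = ∑ a ∈ Finset.range (2 * N + 1), ∑ b ∈ Finset.range (2 * N + 1), c a b := by
    rw [Finset.sum_subset (Finset.range_subset_range.2 (show N + 1 ≤ 2 * N + 1 by omega))
      (fun a _ ha => ?_)]
    · exact Finset.sum_congr rfl (fun a _ =>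
        Finset.sum_subset (Finset.range_subset_range.2 (show N + 1 ≤ 2 * N + 1 by omega))
          (fun b _ hb => hc0 a b (Or.inr (by simp only [Finset.mem_range, not_lt] at hb; omega))))
    · exact Finset.sum_eq_zero (fun b _ => hc0 a b (Or.inl (by simp only [Finset.mem_range, not_lt] at ha; omega)))
  have step3 : (∑ a ∈ Finset.range (2 * N + 1), ∑ b ∈ Finset.range (2 * N + 1), c a b)
      = ∑ a ∈ Finset.range (2 * N + 1), ∑ b ∈ Finset.range ((2 * N + 1) - a), c a b := by
    refine Finset.sum_congr rfl (fun a ha => ?_)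
    have ha' := Finset.mem_range.1 ha
    exact (Finset.sum_subset (Finset.range_subset_range.2 (by omega))
      (fun b hb hnb => hc0 a b (by
        have h1 := Finset.mem_range.1 hb
        have h2 : (2 * N + 1) - a ≤ b := by
          by_contra hcon
          exact hnb (Finset.mem_range.2 (by omega))
        omega))).symm
  have step4 : (∑ a ∈ Finset.range (2 * N + 1), ∑ b ∈ Finset.range ((2 * N + 1) - a), c a b)
      = ∑ s ∈ Finset.range (2 * N + 1), ∑ a ∈ Finset.range (s + 1), c a (s - a) :=
    (Finset.sum_range_diag_flip (2 * N + 1) c).symm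
  have step5 : (∑ s ∈ Finset.range (2 * N + 1), ∑ a ∈ Finset.range (s + 1), c a (s - a))
      = c 0 0 := by
    rw [Finset.sum_eq_single 0
      (fun s _ hs => aux_T A hx s (by omega))
      (fun h => absurd (Finset.mem_range.2 (by omega)) h)]
    simp
    rfl
  have hemp : (fun _ : Fin 0 => x) = ![] := by
    funext j; exact j.elim0
  rw [step1, step2, step3, step4, step5]
  show A.Q (A.m 0 fun _ => x) (A.m 0 fun _ => x) = _
  rw [hemp]
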